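/- Let A be an m×n real matrix, ℓ < min(m,n), q a positive integer, and G an n×n real matrix. Let A = URV* be the PowerURV factorization built from G (i.e., (A*A)^q G = VZ with V orthogonal and Z upper triangular, and AV = UR with U orthonormal columns, R upper triangular). Let G_rsvd = G(:,1:ℓ), Y = A(A*A)^q G_rsvd, Y = Q_r R_r an (economy) QR factorization, Q_r* A = W Σ V_r* an SVD, and U_rsvd = Q_r W. If rank(A(A*A)^q G_rsvd) ≥ rank(A), then U(:,1:ℓ) U(:,1:ℓ)* A = U_rsvd U_rsvd* A. -/
import Mathlib


open Matrix

/-- The equivalence lemma between PowerURV and the RSVD: the first `ℓ` columns of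
the PowerURV factor `U` define the same orthogonal projector applied to `A` as the
RSVD factor `U_rsvd` built from the first `ℓ` columns of the same random matrix. -/
theorem powerURV_eq_rsvd {m n ℓ : ℕ} (A : Matrix (Fin m) (Fin n) ℝ)
    (hℓm : ℓ < m) (hℓn : ℓ < n) (q : ℕ) (hq : 0 < q)
    (G : Matrix (Fin n) (Fin n) ℝ)
    -- PowerURV factorization A = U R Vᵀ built from G:
    (V Z : Matrix (Fin n) (Fin n) ℝ)
    (hV : Vᵀ * V = 1) (hZ : ∀ i j : Fin n, j < i → Z i j = 0)
    (hQR1 : (Aᵀ * A) ^ q * G = V * Z)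
    (U : Matrix (Fin m) (Fin n) ℝ) (R : Matrix (Fin n) (Fin n) ℝ)
    (hU : Uᵀ * U = 1) (hR : ∀ i j : Fin n, j < i → R i j = 0)
    (hQR2 : A * V = U * R)
    -- RSVD built from G_rsvd = G(:, 1:ℓ):
    (Grsvd : Matrix (Fin n) (Fin ℓ) ℝ)
    (hGrsvd : Grsvd = G.submatrix id (Fin.castLE hℓn.le))
    (Y : Matrix (Fin m) (Fin ℓ) ℝ)
    (hY : Y = A * (Aᵀ * A) ^ q * Grsvd)
    (Qr : Matrix (Fin m) (Fin ℓ) ℝ) (Rr : Matrix (Fin ℓ) (Fin ℓ) ℝ)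
    (hQr : Qrᵀ * Qr = 1) (hRr : ∀ i j : Fin ℓ, j < i → Rr i j = 0)
    (hQRr : Y = Qr * Rr)
    (W Sig : Matrix (Fin ℓ) (Fin ℓ) ℝ) (Vr : Matrix (Fin n) (Fin ℓ) ℝ)
    (hW : Wᵀ * W = 1) (hVr : Vrᵀ * Vr = 1)
    (hSigdiag : ∀ i j : Fin ℓ, i ≠ j → Sig i j = 0) (hSigpos : ∀ i : Fin ℓ, 0 ≤ Sig i i)
    (hSVD : Qrᵀ * A = W * Sig * Vrᵀ)
    (Ursvd : Matrix (Fin m) (Fin ℓ) ℝ) (hUrsvd : Ursvd = Qr * W)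
    -- rank hypothesis on the sketch:
    (hrank : A.rank ≤ (A * (Aᵀ * A) ^ q * Grsvd).rank) :
    (U.submatrix id (Fin.castLE hℓn.le)) * (U.submatrix id (Fin.castLE hℓn.le))ᵀ * A
      = Ursvd * Ursvdᵀ * A := by

  -- Abbreviations
  set Yfull : Matrix (Fin m) (Fin ℓ) ℝ := A * (Aᵀ * A) ^ q * Grsvd with hYfull
  -- Step 1: range of the sketch equals range of A
  have hle : LinearMap.range Yfull.mulVecLin ≤ LinearMap.range A.mulVecLin := by
    have : Yfull = A * ((Aᵀ * A) ^ q * Grsvd) := by rw [hYfull, Matrix.mul_assoc]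
    rw [this, Matrix.mulVecLin_mul]
    exact LinearMap.range_comp_le_range _ _
  have hrange : LinearMap.range Yfull.mulVecLin = LinearMap.range A.mulVecLin :=
    Submodule.eq_of_le_of_finrank_le hle hrank
  -- Step 2: factor A = Y * N
  have hcol : ∀ j : Fin n, ∃ x : Fin ℓ → ℝ, Yfull *ᵥ x = fun i => A i j := by
    intro j
    have hmem : (fun i => A i j) ∈ LinearMap.range A.mulVecLin := by
      exact ⟨Pi.single j 1, by ext i; simp [Matrix.mulVecLin_apply, Matrix.mulVec_single]⟩
    rw [← hrange] at hmem
    exact hmem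
  choose x hx using hcol
  set N : Matrix (Fin ℓ) (Fin n) ℝ := Matrix.of (fun k j => x j k) with hN
  have hAYN : A = Yfull * N := by
    ext i j
    have := congrFun (hx j) i
    simp only [Matrix.mulVec, dotProduct] at this
    simp [Matrix.mul_apply, hN, ← this]
  -- Step 3: Y = Uℓ * T with T upper-triangular part
  set P : Matrix (Fin n) (Fin n) ℝ := R * Z with hPdef
  have hP : ∀ i j : Fin n, j < i → P i j = 0 := by
    intro i j hij
    rw [hPdef, Matrix.mul_apply]
    apply Finset.sum_eq_zero
    intro k _
    rcases lt_or_ge k i with h | h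
    · rw [hR i k h, zero_mul]
    · rw [hZ k j (lt_of_lt_of_le hij h), mul_zero]
  have hUP : A * (Aᵀ * A) ^ q * G = U * P := by
    calc A * (Aᵀ * A) ^ q * G = A * ((Aᵀ * A) ^ q * G) := by rw [Matrix.mul_assoc]
    _ = A * (V * Z) := by rw [hQR1]
    _ = (A * V) * Z := by rw [Matrix.mul_assoc]
    _ = (U * R) * Z := by rw [hQR2]
    _ = U * P := by rw [Matrix.mul_assoc, hPdef]
  set Uℓ : Matrix (Fin m) (Fin ℓ) ℝ := U.submatrix id (Fin.castLE hℓn.le) with hUℓdef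
  set T : Matrix (Fin ℓ) (Fin ℓ) ℝ :=
    P.submatrix (Fin.castLE hℓn.le) (Fin.castLE hℓn.le) with hTdef
  have hYUT : Yfull = Uℓ * T := by
    have h1 : Yfull = (U * P).submatrix id (Fin.castLE hℓn.le) := by
      rw [hYfull, hGrsvd, ← hUP]
      ext i j
      simp [Matrix.mul_apply, Matrix.submatrix_apply]
    rw [h1]
    ext i j
    rw [Matrix.submatrix_apply, Matrix.mul_apply, Matrix.mul_apply]
    have hzero : ∀ k : Fin n, k ∉ (Finset.univ.map (Fin.castLEEmb hℓn.le)) →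
        U i k * P k (Fin.castLE hℓn.le j) = 0 := by
      intro k hk
      have hkℓ : ℓ ≤ (k : ℕ) := by
        by_contra hlt
        push_neg at hlt
        exact hk (Finset.mem_map.mpr ⟨⟨(k : ℕ), hlt⟩, Finset.mem_univ _, by
          simp [Fin.castLEEmb, Fin.castLE, Fin.ext_iff]⟩)
      have : (Fin.castLE hℓn.le j) < k := by
        simp only [Fin.lt_iff_val_lt_val, Fin.coe_castLE]
        exact lt_of_lt_of_le j.isLt hkℓ
      rw [hP k _ this, mul_zero]
    calc ∑ k : Fin n, U i k * P k (Fin.castLE hℓn.le j)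
        = ∑ k ∈ Finset.univ.map (Fin.castLEEmb hℓn.le),
            U i k * P k (Fin.castLE hℓn.le j) :=
          (Finset.sum_subset (Finset.subset_univ _) (fun k _ hk => hzero k hk)).symm
      _ = ∑ k : Fin ℓ, Uℓ i k * T k j := by
          rw [Finset.sum_map]
          apply Finset.sum_congr rfl
          intro k _
          simp [hUℓdef, hTdef, Matrix.submatrix_apply, Fin.castLEEmb]
  -- Step 4: orthonormality of Uℓ
  have hUℓorth : Uℓᵀ * Uℓ = 1 := by
    ext i j
    rw [Matrix.mul_apply]
    have h1 : ∑ k, Uℓᵀ i k * Uℓ k j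
        = (Uᵀ * U) (Fin.castLE hℓn.le i) (Fin.castLE hℓn.le j) := by
      rw [Matrix.mul_apply]
      apply Finset.sum_congr rfl
      intro k _
      simp [hUℓdef, Matrix.submatrix_apply, Matrix.transpose_apply]
    rw [h1, hU]
    by_cases hij : i = j
    · subst hij; simp [Matrix.one_apply]
    · have : (Fin.castLE hℓn.le i) ≠ (Fin.castLE hℓn.le j) := by
        simp [Fin.ext_iff] at hij ⊢
        exact hij
      rw [Matrix.one_apply_ne this, Matrix.one_apply_ne hij]
  -- Step 5: LHS = A
  have hA1 : A = Uℓ * (T * N) := by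
    rw [hAYN, hYUT, Matrix.mul_assoc]
  have hLHS : Uℓ * Uℓᵀ * A = A := by
    calc Uℓ * Uℓᵀ * A = Uℓ * Uℓᵀ * (Uℓ * (T * N)) := by rw [← hA1]
      _ = Uℓ * (Uℓᵀ * Uℓ) * (T * N) := by
          rw [Matrix.mul_assoc, Matrix.mul_assoc, Matrix.mul_assoc]
      _ = Uℓ * (T * N) := by rw [hUℓorth, Matrix.mul_one]
      _ = A := hA1.symm
  -- Step 6: RHS = A
  have hWW : W * Wᵀ = 1 := mul_eq_one_comm.mp hW
  have hA2 : A = Qr * (Rr * N) := by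
    rw [hAYN, ← hY, hQRr, Matrix.mul_assoc]
  have hUrsvdUrsvd : Ursvd * Ursvdᵀ = Qr * Qrᵀ := by
    rw [hUrsvd, Matrix.transpose_mul]
    calc Qr * W * (Wᵀ * Qrᵀ) = Qr * (W * Wᵀ) * Qrᵀ := by
          rw [Matrix.mul_assoc, Matrix.mul_assoc, Matrix.mul_assoc]
      _ = Qr * Qrᵀ := by rw [hWW, Matrix.mul_one]
  have hRHS : Ursvd * Ursvdᵀ * A = A := by
    rw [hUrsvdUrsvd]
    calc Qr * Qrᵀ * A = Qr * Qrᵀ * (Qr * (Rr * N)) := by rw [← hA2]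
      _ = Qr * (Qrᵀ * Qr) * (Rr * N) := by
          rw [Matrix.mul_assoc, Matrix.mul_assoc, Matrix.mul_assoc]
      _ = Qr * (Rr * N) := by rw [hQr, Matrix.mul_one]
      _ = A := hA2.symm
  rw [← hUℓdef] at *
  rw [hLHS, hRHS]
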